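/- Let n, m ≥ 1 and let G be the abelian group (ℤ/n) × (ℤ/m), written multiplicatively, with g and h generators of the two factors. In the integral group ring R = ℤ[G], set Δ_g = 1 − g, Δ_h = 1 − h, N_g = 1 + g + ⋯ + g^(n−1), N_h = 1 + h + ⋯ + h^(m−1), and let ε : R → ℤ be the augmentation map sending every group element to 1. Define D : R² → R by D(x, y) = Δ_g·x + Δ_h·y and A : R³ → R² by A(x, y, z) = (N_g·x + Δ_h·y, −Δ_g·y + N_h·z). Then the sequence R³ → R² → R → ℤ → 0 is exact: ε is surjective, the kernel of ε equals the image of D, and the kernel of D equals the image of A. -/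

import Mathlib

noncomputable section

/-- The bicyclic group `(ℤ/n) × (ℤ/m)`, written multiplicatively. -/
abbrev BicyclicGroup (n m : ℕ) := Multiplicative (ZMod n × ZMod m)

/-- The integral group ring `ℤ[(ℤ/n) × (ℤ/m)]`. -/
abbrev BicyclicGroupRing (n m : ℕ) := MonoidAlgebra ℤ (BicyclicGroup n m)

/-- The generator `g` of the first factor, as an element of the group ring. -/
def bicyclicG (n m : ℕ) : BicyclicGroupRing n m :=
  MonoidAlgebra.of ℤ (BicyclicGroup n m) (Multiplicative.ofAdd (1, 0))

/-- The generator `h` of the second factor, as an element of the group ring. -/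
def bicyclicH (n m : ℕ) : BicyclicGroupRing n m :=
  MonoidAlgebra.of ℤ (BicyclicGroup n m) (Multiplicative.ofAdd (0, 1))

/-- The norm element `N_g = 1 + g + ⋯ + g^(n−1)`. -/
def bicyclicNg (n m : ℕ) : BicyclicGroupRing n m :=
  ∑ i ∈ Finset.range n, bicyclicG n m ^ i

/-- The norm element `N_h = 1 + h + ⋯ + h^(m−1)`. -/
def bicyclicNh (n m : ℕ) : BicyclicGroupRing n m :=
  ∑ i ∈ Finset.range m, bicyclicH n m ^ i

/-- The augmentation map `ε : ℤ[G] → ℤ`, sending every group element to `1`. -/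
def bicyclicAug (n m : ℕ) : BicyclicGroupRing n m →ₐ[ℤ] ℤ :=
  MonoidAlgebra.lift ℤ ℤ (BicyclicGroup n m) 1

namespace BicyclicAux
open MonoidAlgebra Finsupp Finset

/-! ### General lemmas over an arbitrary commutative group -/

variable {K : Type*} [CommGroup K]

/-- Telescoping operator: `single σ t ↦ ∑_{k < N σ} single (σ u^k) t`. -/
def tel (u : K) (N : K → ℕ) : MonoidAlgebra ℤ K →ₗ[ℤ] MonoidAlgebra ℤ K :=
  (Finsupp.lsum ℤ fun σ => ∑ k ∈ Finset.range (N σ), MonoidAlgebra.lsingle (σ * u ^ k)) ∘ₗ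
    (MonoidAlgebra.coeffLinearEquiv ℤ).toLinearMap

/-- Projection-like operator: `single σ t ↦ single (σ u^(N σ)) t`. -/
def prj (u : K) (N : K → ℕ) : MonoidAlgebra ℤ K →ₗ[ℤ] MonoidAlgebra ℤ K :=
  (Finsupp.lsum ℤ fun σ => MonoidAlgebra.lsingle (σ * u ^ (N σ))) ∘ₗ
    (MonoidAlgebra.coeffLinearEquiv ℤ).toLinearMap

lemma tel_single (u : K) (N : K → ℕ) (σ : K) (t : ℤ) :
    tel u N (MonoidAlgebra.single σ t)
      = ∑ k ∈ Finset.range (N σ), MonoidAlgebra.single (σ * u ^ k) t := by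
  show ((Finsupp.lsum ℤ) fun σ => ∑ k ∈ Finset.range (N σ), MonoidAlgebra.lsingle (σ * u ^ k))
      (Finsupp.single σ t) = _
  rw [Finsupp.lsum_single]
  simp [MonoidAlgebra.lsingle_apply]

lemma prj_single (u : K) (N : K → ℕ) (σ : K) (t : ℤ) :
    prj u N (MonoidAlgebra.single σ t) = MonoidAlgebra.single (σ * u ^ (N σ)) t := by
  show ((Finsupp.lsum ℤ) fun σ => MonoidAlgebra.lsingle (σ * u ^ (N σ))) (Finsupp.single σ t) = _
  rw [Finsupp.lsum_single, MonoidAlgebra.lsingle_apply]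

lemma sub_mul_single (u : K) (τ : K) (t : ℤ) :
    (1 - MonoidAlgebra.of ℤ K u) * MonoidAlgebra.single τ t
      = MonoidAlgebra.single τ t - MonoidAlgebra.single (u * τ) t := by
  rw [sub_mul, one_mul, MonoidAlgebra.of_apply, MonoidAlgebra.single_mul_single, one_mul]

lemma of_mul_single (u : K) (σ : K) (t : ℤ) :
    MonoidAlgebra.of ℤ K u * MonoidAlgebra.single σ t = MonoidAlgebra.single (u * σ) t := by
  rw [MonoidAlgebra.of_apply, MonoidAlgebra.single_mul_single, one_mul]

lemma tel_spec (u : K) (N : K → ℕ) (r : MonoidAlgebra ℤ K) :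
    (1 - MonoidAlgebra.of ℤ K u) * tel u N r = r - prj u N r := by
  induction r using MonoidAlgebra.induction_linear with
  | zero => simp
  | add f g hf hg => rw [map_add, map_add, mul_add, hf, hg]; ring
  | single σ t =>
    rw [tel_single, prj_single, Finset.mul_sum]
    calc ∑ k ∈ Finset.range (N σ),
            (1 - MonoidAlgebra.of ℤ K u) * MonoidAlgebra.single (σ * u ^ k) t
        = ∑ k ∈ Finset.range (N σ),
            (MonoidAlgebra.single (σ * u ^ k) t - MonoidAlgebra.single (σ * u ^ (k + 1)) t) := by
          refine Finset.sum_congr rfl fun k _ => ?_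
          rw [sub_mul_single]
          congr 2
          rw [pow_succ, ← mul_assoc, mul_comm u σ, mul_assoc, mul_comm u (u ^ k)]
      _ = MonoidAlgebra.single (σ * u ^ 0) t - MonoidAlgebra.single (σ * u ^ (N σ)) t :=
          Finset.sum_range_sub' (fun k => MonoidAlgebra.single (σ * u ^ k) t) (N σ)
      _ = MonoidAlgebra.single σ t - MonoidAlgebra.single (σ * u ^ (N σ)) t := by
          rw [pow_zero, mul_one]

variable {d : ℕ} [NeZero d]
set_option linter.unusedSectionVars false

lemma sum_range_cast {β : Type*} [AddCommMonoid β] (F : ZMod d → β) :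
    ∑ k ∈ Finset.range d, F (k : ZMod d) = ∑ c : ZMod d, F c := by
  refine Finset.sum_nbij' (fun k => (k : ZMod d)) (fun c => c.val) ?_ ?_ ?_ ?_ ?_
  · intro a _; exact Finset.mem_univ _
  · intro c _; exact Finset.mem_range.mpr (ZMod.val_lt c)
  · intro a ha; exact ZMod.val_cast_of_lt (Finset.mem_range.mp ha)
  · intro c _; exact ZMod.natCast_rightInverse c
  · intro a _; rfl

/-- Keeps only the basis elements with index `c`. -/
def slice (ind : K → ZMod d) (c : ZMod d) : MonoidAlgebra ℤ K →ₗ[ℤ] MonoidAlgebra ℤ K :=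
  (Finsupp.lsum ℤ fun σ => if ind σ = c then MonoidAlgebra.lsingle σ else 0) ∘ₗ
    (MonoidAlgebra.coeffLinearEquiv ℤ).toLinearMap

lemma slice_single (ind : K → ZMod d) (c : ZMod d) (σ : K) (t : ℤ) :
    slice ind c (MonoidAlgebra.single σ t)
      = if ind σ = c then MonoidAlgebra.single σ t else 0 := by
  show ((Finsupp.lsum ℤ) fun σ => if ind σ = c then MonoidAlgebra.lsingle σ else 0)
      (Finsupp.single σ t) = _
  rw [Finsupp.lsum_single]
  split <;> simp [MonoidAlgebra.lsingle_apply]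

lemma sum_slice (ind : K → ZMod d) (r : MonoidAlgebra ℤ K) :
    ∑ c : ZMod d, slice ind c r = r := by
  induction r using MonoidAlgebra.induction_linear with
  | zero => simp
  | add f g hf hg => simp only [map_add, Finset.sum_add_distrib, hf, hg]
  | single σ t =>
    have : ∀ c : ZMod d, slice ind c (MonoidAlgebra.single σ t)
        = if ind σ = c then MonoidAlgebra.single σ t else 0 := fun c => slice_single ind c σ t
    rw [Finset.sum_congr rfl fun c _ => this c]
    rw [Finset.sum_ite_eq Finset.univ (ind σ) (fun _ => MonoidAlgebra.single σ t)]
    simp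

lemma of_mul_slice (u : K) (ind : K → ZMod d) (hind : ∀ τ, ind (u * τ) = ind τ + 1)
    (c : ZMod d) (r : MonoidAlgebra ℤ K) :
    MonoidAlgebra.of ℤ K u * slice ind c r = slice ind (c + 1) (MonoidAlgebra.of ℤ K u * r) := by
  induction r using MonoidAlgebra.induction_linear with
  | zero => simp
  | add f g hf hg => simp only [map_add, mul_add, hf, hg]
  | single σ t =>
    rw [of_mul_single, slice_single, slice_single, hind σ]
    by_cases hc : ind σ = c
    · rw [if_pos hc, if_pos (by rw [hc]), of_mul_single]
    · rw [if_neg hc, if_neg (by simpa using hc), mul_zero]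

lemma pow_mul_slice (u : K) (ind : K → ZMod d) (hind : ∀ τ, ind (u * τ) = ind τ + 1)
    (c : ZMod d) (r : MonoidAlgebra ℤ K) (k : ℕ) :
    MonoidAlgebra.of ℤ K u ^ k * slice ind c r
      = slice ind (c + k) (MonoidAlgebra.of ℤ K u ^ k * r) := by
  induction k with
  | zero => simp
  | succ k ih =>
    calc MonoidAlgebra.of ℤ K u ^ (k + 1) * slice ind c r
        = MonoidAlgebra.of ℤ K u * (MonoidAlgebra.of ℤ K u ^ k * slice ind c r) := by
          rw [pow_succ]; ring
      _ = MonoidAlgebra.of ℤ K u * slice ind (c + k) (MonoidAlgebra.of ℤ K u ^ k * r) := by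
          rw [ih]
      _ = slice ind (c + k + 1)
            (MonoidAlgebra.of ℤ K u * (MonoidAlgebra.of ℤ K u ^ k * r)) := by
          rw [of_mul_slice u ind hind]
      _ = slice ind (c + (k + 1 : ℕ)) (MonoidAlgebra.of ℤ K u ^ (k + 1) * r) := by
          rw [pow_succ]
          congr 1
          · push_cast; ring
          · ring

lemma exists_norm_mul (u : K) (ind : K → ZMod d) (hind : ∀ τ, ind (u * τ) = ind τ + 1)
    (r : MonoidAlgebra ℤ K) (hr : (1 - MonoidAlgebra.of ℤ K u) * r = 0) :
    ∃ s, (∑ k ∈ Finset.range d, MonoidAlgebra.of ℤ K u ^ k) * s = r := by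
  have h1 : MonoidAlgebra.of ℤ K u * r = r :=
    (sub_eq_zero.mp (by linear_combination hr)).symm
  have hk : ∀ k : ℕ, MonoidAlgebra.of ℤ K u ^ k * r = r := by
    intro k
    induction k with
    | zero => simp
    | succ k ih =>
      calc MonoidAlgebra.of ℤ K u ^ (k + 1) * r
          = MonoidAlgebra.of ℤ K u * (MonoidAlgebra.of ℤ K u ^ k * r) := by rw [pow_succ]; ring
        _ = r := by rw [ih, h1]
  refine ⟨slice ind 0 r, ?_⟩
  rw [Finset.sum_mul]
  calc ∑ k ∈ Finset.range d, MonoidAlgebra.of ℤ K u ^ k * slice ind 0 r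
      = ∑ k ∈ Finset.range d, slice ind ((k : ZMod d)) r := by
        refine Finset.sum_congr rfl fun k _ => ?_
        rw [pow_mul_slice u ind hind, hk k, zero_add]
    _ = ∑ c : ZMod d, slice ind c r := sum_range_cast (fun c => slice ind c r)
    _ = r := sum_slice ind r

/-! ### Specialisation to the bicyclic group -/

variable (n m : ℕ)

abbrev gElt : BicyclicGroup n m := Multiplicative.ofAdd (1, 0)
abbrev hElt : BicyclicGroup n m := Multiplicative.ofAdd (0, 1)

/-- Exponent function for the `h`-telescope. -/
abbrev NhF : BicyclicGroup n m → ℕ := fun σ => m - (Multiplicative.toAdd σ).2.val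

/-- The group homomorphism killing the second factor. -/
def projH : BicyclicGroup n m →* BicyclicGroup n m :=
  AddMonoidHom.toMultiplicative ((AddMonoidHom.inl (ZMod n) (ZMod m)).comp
    (AddMonoidHom.fst (ZMod n) (ZMod m)))

/-- The group homomorphism killing the first factor. -/
def projG : BicyclicGroup n m →* BicyclicGroup n m :=
  AddMonoidHom.toMultiplicative ((AddMonoidHom.inr (ZMod n) (ZMod m)).comp
    (AddMonoidHom.snd (ZMod n) (ZMod m)))

lemma projH_apply (σ : BicyclicGroup n m) :
    projH n m σ = Multiplicative.ofAdd ((Multiplicative.toAdd σ).1, 0) := by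
  simp [projH, Prod.ext_iff]

lemma projG_apply (σ : BicyclicGroup n m) :
    projG n m σ = Multiplicative.ofAdd (0, (Multiplicative.toAdd σ).2) := by
  simp [projG, Prod.ext_iff]

lemma hElt_pow (k : ℕ) :
    hElt n m ^ k = Multiplicative.ofAdd ((0 : ZMod n), (k : ZMod m)) := by
  rw [← ofAdd_nsmul]
  congr 1
  rw [Prod.smul_mk, smul_zero, nsmul_eq_mul, mul_one]

lemma gElt_pow (k : ℕ) :
    gElt n m ^ k = Multiplicative.ofAdd (((k : ZMod n)), (0 : ZMod m)) := by
  rw [← ofAdd_nsmul]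
  congr 1
  rw [Prod.smul_mk, smul_zero, nsmul_eq_mul, mul_one]

variable {n m}

lemma grp_h [NeZero m] (σ : BicyclicGroup n m) :
    σ * hElt n m ^ (m - (Multiplicative.toAdd σ).2.val) = projH n m σ := by
  rw [hElt_pow, projH_apply]
  apply Multiplicative.toAdd.injective
  have hle : (Multiplicative.toAdd σ).2.val ≤ m := (ZMod.val_lt _).le
  have hcast : ((m - (Multiplicative.toAdd σ).2.val : ℕ) : ZMod m)
      = -(Multiplicative.toAdd σ).2 := by
    rw [Nat.cast_sub hle, ZMod.natCast_self, zero_sub]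
    congr 1
    exact ZMod.natCast_rightInverse _
  simp only [toAdd_mul, toAdd_ofAdd, hcast, Prod.ext_iff]
  constructor
  · simp
  · simp

lemma hind_g (τ : BicyclicGroup n m) :
    (Multiplicative.toAdd (gElt n m * τ)).1 = (Multiplicative.toAdd τ).1 + 1 := by
  simp [add_comm]

lemma hind_h (τ : BicyclicGroup n m) :
    (Multiplicative.toAdd (hElt n m * τ)).2 = (Multiplicative.toAdd τ).2 + 1 := by
  simp [add_comm]

variable (n m)

/-- The ring homomorphism on the group ring killing `h`. -/
def phiH : BicyclicGroupRing n m →+* BicyclicGroupRing n m :=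
  MonoidAlgebra.mapDomainRingHom ℤ (projH n m)

/-- The ring homomorphism on the group ring killing `g`. -/
def phiG : BicyclicGroupRing n m →+* BicyclicGroupRing n m :=
  MonoidAlgebra.mapDomainRingHom ℤ (projG n m)

lemma phiH_single (σ : BicyclicGroup n m) (t : ℤ) :
    phiH n m (MonoidAlgebra.single σ t) = MonoidAlgebra.single (projH n m σ) t := by
  simp [phiH]

lemma phiG_single (σ : BicyclicGroup n m) (t : ℤ) :
    phiG n m (MonoidAlgebra.single σ t) = MonoidAlgebra.single (projG n m σ) t := by
  simp [phiG]

lemma phiH_g : phiH n m (bicyclicG n m) = bicyclicG n m := by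
  rw [bicyclicG, MonoidAlgebra.of_apply, phiH_single, projH_apply]
  rfl

lemma phiH_h : phiH n m (bicyclicH n m) = 1 := by
  rw [bicyclicH, MonoidAlgebra.of_apply, phiH_single, projH_apply]
  rfl

lemma prjH_eq [NeZero m] (x : BicyclicGroupRing n m) :
    prj (hElt n m) (NhF n m) x = phiH n m x := by
  induction x using MonoidAlgebra.induction_linear with
  | zero => simp
  | add f g hf hg => rw [map_add, map_add, hf, hg]
  | single σ t => rw [prj_single, phiH_single, grp_h σ]

lemma telH_spec [NeZero m] (x : BicyclicGroupRing n m) :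
    (1 - bicyclicH n m) * tel (hElt n m) (NhF n m) x = x - phiH n m x := by
  have := tel_spec (hElt n m) (NhF n m) x
  rw [prjH_eq] at this
  exact this

lemma aug_single (σ : BicyclicGroup n m) (t : ℤ) :
    bicyclicAug n m (MonoidAlgebra.single σ t) = t := by
  rw [bicyclicAug, MonoidAlgebra.lift_single]
  simp

lemma phiG_phiH (x : BicyclicGroupRing n m) :
    phiG n m (phiH n m x) = MonoidAlgebra.single 1 (bicyclicAug n m x) := by
  induction x using MonoidAlgebra.induction_linear with
  | zero => simp
  | add f g hf hg =>
    rw [map_add, map_add, map_add, hf, hg]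
    exact (MonoidAlgebra.single_add _ _ _).symm
  | single σ t =>
    have hone : projG n m (projH n m σ) = 1 := by
      rw [projH_apply, projG_apply]
      rfl
    rw [phiH_single, phiG_single, hone, aug_single]

lemma aug_g : bicyclicAug n m (bicyclicG n m) = 1 := by
  rw [bicyclicG, bicyclicAug, MonoidAlgebra.lift_of]
  rfl

lemma aug_h : bicyclicAug n m (bicyclicH n m) = 1 := by
  rw [bicyclicH, bicyclicAug, MonoidAlgebra.lift_of]
  rfl

lemma gpow_n [NeZero m] : bicyclicG n m ^ n = 1 := by
  rw [bicyclicG, ← map_pow, gElt_pow, ZMod.natCast_self]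
  rfl

lemma hpow_m [NeZero n] : bicyclicH n m ^ m = 1 := by
  rw [bicyclicH, ← map_pow, hElt_pow, ZMod.natCast_self]
  rfl

lemma normG_ann [NeZero m] : (1 - bicyclicG n m) * bicyclicNg n m = 0 := by
  have h2 := geom_sum_mul (bicyclicG n m) n
  have hp := gpow_n n m
  rw [bicyclicNg]
  linear_combination -h2 - hp

lemma normH_ann [NeZero n] : (1 - bicyclicH n m) * bicyclicNh n m = 0 := by
  have h2 := geom_sum_mul (bicyclicH n m) m
  have hp := hpow_m n m
  rw [bicyclicNh]
  linear_combination -h2 - hp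

lemma ker_g [NeZero n] (r : BicyclicGroupRing n m)
    (hr : (1 - bicyclicG n m) * r = 0) : ∃ s, bicyclicNg n m * s = r :=
  exists_norm_mul (gElt n m) (fun σ => (Multiplicative.toAdd σ).1)
    (fun τ => hind_g τ) r hr

lemma ker_h [NeZero m] (r : BicyclicGroupRing n m)
    (hr : (1 - bicyclicH n m) * r = 0) : ∃ s, bicyclicNh n m * s = r :=
  exists_norm_mul (hElt n m) (fun σ => (Multiplicative.toAdd σ).2)
    (fun τ => hind_h τ) r hr

end BicyclicAux

open BicyclicAux in
/-- Proposition 4.2 (ii): the tail `R³ → R² → R → ℤ → 0` of the efficient free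
resolution of `ℤ` over the group ring `R = ℤ[(ℤ/n) × (ℤ/m)]` is exact, where the
maps are `A(x,y,z) = (N_g·x + Δ_h·y, −Δ_g·y + N_h·z)`, `D(x,y) = Δ_g·x + Δ_h·y`,
and the augmentation `ε`. -/
theorem bicyclic_resolution_exact (n m : ℕ) (hn : 1 ≤ n) (hm : 1 ≤ m) :
    Function.Surjective (bicyclicAug n m) ∧
    (∀ x : BicyclicGroupRing n m,
      bicyclicAug n m x = 0 ↔
        ∃ y : BicyclicGroupRing n m × BicyclicGroupRing n m,
          (1 - bicyclicG n m) * y.1 + (1 - bicyclicH n m) * y.2 = x) ∧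
    (∀ y : BicyclicGroupRing n m × BicyclicGroupRing n m,
      (1 - bicyclicG n m) * y.1 + (1 - bicyclicH n m) * y.2 = 0 ↔
        ∃ z : BicyclicGroupRing n m × BicyclicGroupRing n m × BicyclicGroupRing n m,
          (bicyclicNg n m * z.1 + (1 - bicyclicH n m) * z.2.1,
            -(1 - bicyclicG n m) * z.2.1 + bicyclicNh n m * z.2.2) = y) := by
  haveI : NeZero n := ⟨by omega⟩
  haveI : NeZero m := ⟨by omega⟩
  refine ⟨?_, ?_, ?_⟩
  · -- surjectivity of the augmentation
    intro c
    refine ⟨MonoidAlgebra.single 1 c, ?_⟩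
    rw [aug_single]
  · -- kernel of ε = image of D
    intro x
    constructor
    · intro hx
      -- use the telescopes in both directions
      refine ⟨(tel (gElt n m) (fun σ => n - (Multiplicative.toAdd σ).1.val)
          (phiH n m x), tel (hElt n m) (NhF n m) x), ?_⟩
      have h1 := telH_spec n m x
      -- the `g` telescope, via `tel_spec` and the projG identification
      have h2 := tel_spec (gElt n m) (fun σ => n - (Multiplicative.toAdd σ).1.val)
        (phiH n m x)
      have h3 : prj (gElt n m) (fun σ => n - (Multiplicative.toAdd σ).1.val)
          (phiH n m x) = phiG n m (phiH n m x) := by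
        induction (phiH n m x) using MonoidAlgebra.induction_linear with
        | zero => simp
        | add f g hf hg => rw [map_add, map_add, hf, hg]
        | single σ t =>
          rw [prj_single, phiG_single]
          congr 1
          -- σ * g^(n - val) = projG σ
          rw [gElt_pow, projG_apply]
          apply Multiplicative.toAdd.injective
          have hle : (Multiplicative.toAdd σ).1.val ≤ n := (ZMod.val_lt _).le
          have hcast : ((n - (Multiplicative.toAdd σ).1.val : ℕ) : ZMod n)
              = -(Multiplicative.toAdd σ).1 := by
            rw [Nat.cast_sub hle, ZMod.natCast_self, zero_sub]
            congr 1
            exact ZMod.natCast_rightInverse _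
          simp only [toAdd_mul, toAdd_ofAdd, hcast, Prod.ext_iff]
          constructor
          · simp
          · simp
      rw [h3, phiG_phiH, hx] at h2
      have hG : bicyclicG n m
          = MonoidAlgebra.of ℤ (BicyclicGroup n m) (gElt n m) := rfl
      rw [← hG] at h2
      have hz : (MonoidAlgebra.single (1 : BicyclicGroup n m) (0 : ℤ))
          = 0 := MonoidAlgebra.single_zero _
      show (1 - bicyclicG n m) * (tel (gElt n m)
            (fun σ => n - (Multiplicative.toAdd σ).1.val) (phiH n m x))
          + (1 - bicyclicH n m) * (tel (hElt n m) (NhF n m) x) = x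
      linear_combination h2 + h1 - hz
    · rintro ⟨y, rfl⟩
      rw [map_add, map_mul, map_mul, map_sub, map_sub, map_one, aug_g, aug_h]
      ring
  · -- kernel of D = image of A
    intro y
    constructor
    · intro hy
      have h1 : (1 - bicyclicG n m) * phiH n m y.1 = 0 := by
        have hph := congrArg (phiH n m) hy
        rw [map_add, map_mul, map_mul, map_sub, map_sub, map_one, phiH_g, phiH_h,
          map_zero] at hph
        linear_combination hph
      obtain ⟨s, hs⟩ := ker_g n m (phiH n m y.1) h1
      have ht := telH_spec n m y.1
      have h2 : (1 - bicyclicH n m) *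
          (y.2 + (1 - bicyclicG n m) * tel (hElt n m) (NhF n m) y.1) = 0 := by
        linear_combination hy + (1 - bicyclicG n m) * ht - h1
      obtain ⟨s2, hs2⟩ := ker_h n m _ h2
      refine ⟨(s, tel (hElt n m) (NhF n m) y.1, s2), ?_⟩
      have e1 : bicyclicNg n m * s
          + (1 - bicyclicH n m) * tel (hElt n m) (NhF n m) y.1 = y.1 := by
        linear_combination hs + ht
      have e2 : -(1 - bicyclicG n m) * tel (hElt n m) (NhF n m) y.1
          + bicyclicNh n m * s2 = y.2 := by
        linear_combination hs2
      exact Prod.ext e1 e2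
    · rintro ⟨z, rfl⟩
      have hgN := normG_ann n m
      have hhN := normH_ann n m
      show (1 - bicyclicG n m) * (bicyclicNg n m * z.1 + (1 - bicyclicH n m) * z.2.1)
          + (1 - bicyclicH n m) * (-(1 - bicyclicG n m) * z.2.1
            + bicyclicNh n m * z.2.2) = 0
      linear_combination z.1 * hgN + z.2.2 * hhN

end
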